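/- (Error bound for federated policy improvement with federated policy evaluation.) Suppose each client n produces a policy π^{t+1}_n satisfying ‖T^{π^{t+1}_n}_n V̄^t − T_n V̄^t‖_∞ ≤ ε_n for the common value estimate V̄^t with ‖V̄^t‖_∞ ≤ R_max/(1−γ), and the aggregated policy is π^{t+1}(a|s) = ∑_n q_n π^{t+1}_n(a|s). Then ‖T^{π^{t+1}}_I V̄^t − T_I V̄^t‖_∞ ≤ 2γ R_max κ_1/(1−γ) + ∑_n q_n ε_n, where T_I, T^π_I are the Bellman operators of the imaginary MDP with kernel P̄ = ∑_n q_n P_n and κ_1 = ∑_n q_n κ_{n,I}. -/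
import Mathlib


open Finset Filter

variable {S A : Type*}

/-- A stochastic policy: for each state, a probability distribution over actions. -/
def IsPolicy [Fintype A] (pi : S → A → ℝ) : Prop :=
  (∀ s a, 0 ≤ pi s a) ∧ ∀ s, ∑ a, pi s a = 1

/-- A transition kernel: for each state-action pair, a probability distribution over states. -/
def IsKernel [Fintype S] (P : S → A → S → ℝ) : Prop :=
  (∀ s a s', 0 ≤ P s a s') ∧ ∀ s a, ∑ s', P s a s' = 1

/-- The policy Bellman operator `T^π` for kernel `P`. -/
def Tpol [Fintype S] [Fintype A] (γ : ℝ) (R : S → A → ℝ) (P : S → A → S → ℝ)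
    (pi : S → A → ℝ) (V : S → ℝ) (s : S) : ℝ :=
  ∑ a, pi s a * (R s a + γ * ∑ s', P s a s' * V s')

/-- The Bellman optimality operator `T` for kernel `P`. -/
noncomputable def Topt [Fintype S] [Fintype A] [Nonempty A] (γ : ℝ) (R : S → A → ℝ)
    (P : S → A → S → ℝ) (V : S → ℝ) (s : S) : ℝ :=
  Finset.univ.sup' Finset.univ_nonempty fun a => R s a + γ * ∑ s', P s a s' * V s'

/-- Heterogeneity measure `κ_{m,n}`: the supremum over policies `π` and states `s` of the
ℓ¹-distance between the induced state transition kernels `P_m^π(·|s)` and `P_n^π(·|s)`. -/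
noncomputable def kappa [Fintype S] [Fintype A] (Pm Pn : S → A → S → ℝ) : ℝ :=
  sSup {x : ℝ | ∃ pi : S → A → ℝ, ∃ s : S, IsPolicy pi ∧
    x = ∑ s', |(∑ a, pi s a * Pm s a s') - ∑ a, pi s a * Pn s a s'|}

/-- Sup-norm of a value function on a finite state space. -/
noncomputable def supNorm [Fintype S] [Nonempty S] (V : S → ℝ) : ℝ := ⨆ s, |V s|

variable [Fintype S] [Fintype A] [Nonempty S] [Nonempty A]


lemma abs_le_supNorm (V : S → ℝ) (s : S) : |V s| ≤ supNorm V := by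
  rw [supNorm]
  exact le_ciSup (Set.Finite.bddAbove (Set.finite_range fun s => |V s|)) s

lemma supNorm_le {V : S → ℝ} {c : ℝ} (h : ∀ s, |V s| ≤ c) : supNorm V ≤ c :=
  ciSup_le h

lemma le_kappa {Pm Pn : S → A → S → ℝ} (hm : IsKernel Pm) (hn : IsKernel Pn)
    {pi : S → A → ℝ} (hpi : IsPolicy pi) (s : S) :
    ∑ s', |(∑ a, pi s a * Pm s a s') - ∑ a, pi s a * Pn s a s'| ≤ kappa Pm Pn := by
  apply le_csSup
  · refine ⟨2, ?_⟩
    rintro x ⟨pi', s0, hpi', rfl⟩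
    have key : ∀ (Q : S → A → S → ℝ), IsKernel Q →
        ∑ s', ∑ a, pi' s0 a * Q s0 a s' = 1 := by
      intro Q hQ
      rw [Finset.sum_comm]
      calc ∑ a, ∑ s', pi' s0 a * Q s0 a s' = ∑ a, pi' s0 a * ∑ s', Q s0 a s' := by
            exact Finset.sum_congr rfl fun a _ => (Finset.mul_sum _ _ _).symm
        _ = ∑ a, pi' s0 a := by
            exact Finset.sum_congr rfl fun a _ => by rw [hQ.2, mul_one]
        _ = 1 := hpi'.2 s0
    calc ∑ s', |(∑ a, pi' s0 a * Pm s0 a s') - ∑ a, pi' s0 a * Pn s0 a s'|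
        ≤ ∑ s', ((∑ a, pi' s0 a * Pm s0 a s') + ∑ a, pi' s0 a * Pn s0 a s') := by
          refine Finset.sum_le_sum fun s' _ => ?_
          have h1 : 0 ≤ ∑ a, pi' s0 a * Pm s0 a s' :=
            Finset.sum_nonneg fun a _ => mul_nonneg (hpi'.1 _ _) (hm.1 _ _ _)
          have h2 : 0 ≤ ∑ a, pi' s0 a * Pn s0 a s' :=
            Finset.sum_nonneg fun a _ => mul_nonneg (hpi'.1 _ _) (hn.1 _ _ _)
          calc |(∑ a, pi' s0 a * Pm s0 a s') - ∑ a, pi' s0 a * Pn s0 a s'|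
              ≤ |∑ a, pi' s0 a * Pm s0 a s'| + |∑ a, pi' s0 a * Pn s0 a s'| := abs_sub _ _
            _ = _ := by rw [abs_of_nonneg h1, abs_of_nonneg h2]
      _ = 2 := by rw [Finset.sum_add_distrib, key Pm hm, key Pn hn]; norm_num
  · exact ⟨pi, s, hpi, rfl⟩

lemma l1_le_kappa {Pm Pn : S → A → S → ℝ} (hm : IsKernel Pm) (hn : IsKernel Pn)
    (s : S) (a : A) : ∑ s', |Pm s a s' - Pn s a s'| ≤ kappa Pm Pn := by
  classical
  have hpi : IsPolicy (fun (_ : S) a' => if a' = a then (1:ℝ) else 0) := by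
    constructor
    · intro s a'; dsimp only; split <;> norm_num
    · intro s; simp
  have := le_kappa hm hn hpi s
  simpa using this

lemma Tpol_eq (γ : ℝ) (R : S → A → ℝ) (P : S → A → S → ℝ) (pi : S → A → ℝ)
    (V : S → ℝ) (s : S) :
    Tpol γ R P pi V s =
      (∑ a, pi s a * R s a) + γ * ∑ s', (∑ a, pi s a * P s a s') * V s' := by
  simp only [Tpol, mul_add, Finset.sum_add_distrib]
  congr 1
  calc ∑ a, pi s a * (γ * ∑ s', P s a s' * V s')
      = ∑ a, ∑ s', pi s a * (γ * (P s a s' * V s')) := by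
        refine Finset.sum_congr rfl fun a _ => ?_
        rw [Finset.mul_sum, Finset.mul_sum]
    _ = ∑ s', ∑ a, pi s a * (γ * (P s a s' * V s')) := Finset.sum_comm
    _ = γ * ∑ s', (∑ a, pi s a * P s a s') * V s' := by
        rw [Finset.mul_sum]
        refine Finset.sum_congr rfl fun s' _ => ?_
        rw [Finset.sum_mul, Finset.mul_sum]
        exact Finset.sum_congr rfl fun a _ => by ring

theorem stmt8 (N : ℕ) (γ Rmax : ℝ) (hγ0 : 0 < γ) (hγ1 : γ < 1)
    (R : S → A → ℝ) (hR : ∀ s a, 0 ≤ R s a ∧ R s a ≤ Rmax)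
    (q : Fin N → ℝ) (hq0 : ∀ n, 0 ≤ q n) (hq1 : ∑ n, q n = 1)
    (P : Fin N → S → A → S → ℝ) (hP : ∀ n, IsKernel (P n))
    (Pbar : S → A → S → ℝ) (hPbar : ∀ s a s', Pbar s a s' = ∑ j, q j * P j s a s')
    (Vbar : S → ℝ) (hVbar : supNorm Vbar ≤ Rmax / (1 - γ))
    (pinext : Fin N → S → A → ℝ) (hpinext : ∀ n, IsPolicy (pinext n))
    (ε : Fin N → ℝ)
    (hε : ∀ n, supNorm (fun s => Tpol γ R (P n) (pinext n) Vbar s - Topt γ R (P n) Vbar s) ≤ ε n)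
    (piagg : S → A → ℝ) (hpiagg : ∀ s a, piagg s a = ∑ n, q n * pinext n s a) :
    supNorm (fun s => Tpol γ R Pbar piagg Vbar s - Topt γ R Pbar Vbar s) ≤
      2 * γ * Rmax * (∑ n, q n * kappa (P n) Pbar) / (1 - γ) + ∑ n, q n * ε n := by
  have h1γ : (0:ℝ) < 1 - γ := by linarith
  set M := Rmax / (1 - γ) with hM
  have hRmax : 0 ≤ Rmax := le_trans (hR (Classical.arbitrary S) (Classical.arbitrary A)).1
    (hR (Classical.arbitrary S) (Classical.arbitrary A)).2
  have hM0 : 0 ≤ M := div_nonneg hRmax h1γ.le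
  have hVle : ∀ s, |Vbar s| ≤ M := fun s => le_trans (abs_le_supNorm Vbar s) hVbar
  have hPbarK : IsKernel Pbar := by
    constructor
    · intro s a s'; rw [hPbar]
      exact Finset.sum_nonneg fun j _ => mul_nonneg (hq0 j) ((hP j).1 _ _ _)
    · intro s a
      simp only [hPbar]
      rw [Finset.sum_comm]
      calc ∑ j, ∑ s', q j * P j s a s' = ∑ j, q j * ∑ s', P j s a s' :=
            Finset.sum_congr rfl fun j _ => (Finset.mul_sum _ _ _).symm
        _ = ∑ j, q j := Finset.sum_congr rfl fun j _ => by rw [(hP j).2, mul_one]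
        _ = 1 := hq1
  -- per-n, per-s bound
  have key : ∀ (n : Fin N) (s : S),
      |Tpol γ R Pbar (pinext n) Vbar s - Topt γ R Pbar Vbar s|
        ≤ 2 * γ * M * kappa (P n) Pbar + ε n := by
    intro n s
    set κ := kappa (P n) Pbar with hκ
    -- kernel-difference bound for Tpol
    have hb1 : |Tpol γ R Pbar (pinext n) Vbar s - Tpol γ R (P n) (pinext n) Vbar s|
        ≤ γ * M * κ := by
      rw [Tpol_eq, Tpol_eq]
      have e : ((∑ a, pinext n s a * R s a) + γ * ∑ s', (∑ a, pinext n s a * Pbar s a s') * Vbar s')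
          - ((∑ a, pinext n s a * R s a) + γ * ∑ s', (∑ a, pinext n s a * P n s a s') * Vbar s')
          = γ * ∑ s', ((∑ a, pinext n s a * Pbar s a s') - ∑ a, pinext n s a * P n s a s') * Vbar s' := by
        rw [Finset.mul_sum, Finset.mul_sum, Finset.mul_sum, add_sub_add_left_eq_sub,
          ← Finset.sum_sub_distrib]
        exact Finset.sum_congr rfl fun s' _ => by ring
      rw [e, abs_mul, abs_of_pos hγ0]
      calc γ * |∑ s', ((∑ a, pinext n s a * Pbar s a s') - ∑ a, pinext n s a * P n s a s') * Vbar s'|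
          ≤ γ * ∑ s', |((∑ a, pinext n s a * Pbar s a s') - ∑ a, pinext n s a * P n s a s') * Vbar s'| := by
            gcongr; exact Finset.abs_sum_le_sum_abs _ _
        _ ≤ γ * ∑ s', |(∑ a, pinext n s a * Pbar s a s') - ∑ a, pinext n s a * P n s a s'| * M := by
            gcongr with s' hs'
            rw [abs_mul]; gcongr; exact hVle s'
        _ = γ * M * ∑ s', |(∑ a, pinext n s a * P n s a s') - ∑ a, pinext n s a * Pbar s a s'| := by
            rw [← Finset.sum_mul]
            rw [show (∑ s', |(∑ a, pinext n s a * Pbar s a s') - ∑ a, pinext n s a * P n s a s'|)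
              = ∑ s', |(∑ a, pinext n s a * P n s a s') - ∑ a, pinext n s a * Pbar s a s'| from
              Finset.sum_congr rfl fun s' _ => abs_sub_comm _ _]
            ring
        _ ≤ γ * M * κ := by
            gcongr
            exact le_kappa (hP n) hPbarK (hpinext n) s
    have hb2 : |Tpol γ R (P n) (pinext n) Vbar s - Topt γ R (P n) Vbar s| ≤ ε n :=
      le_trans (abs_le_supNorm (fun s => Tpol γ R (P n) (pinext n) Vbar s - Topt γ R (P n) Vbar s) s) (hε n)
    have hb3 : |Topt γ R (P n) Vbar s - Topt γ R Pbar Vbar s| ≤ γ * M * κ := by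
      have haction : ∀ (Q Q' : S → A → S → ℝ), IsKernel Q → IsKernel Q' →
          kappa Q Q' = κ ∨ kappa Q' Q = κ → True := fun _ _ _ _ _ => trivial
      have hperA : ∀ a : A, |(γ * ∑ s', P n s a s' * Vbar s') - γ * ∑ s', Pbar s a s' * Vbar s'|
          ≤ γ * M * κ := by
        intro a
        rw [← mul_sub, ← Finset.sum_sub_distrib]
        have e : (∑ s', (P n s a s' * Vbar s' - Pbar s a s' * Vbar s'))
            = ∑ s', (P n s a s' - Pbar s a s') * Vbar s' :=
          Finset.sum_congr rfl fun s' _ => by ring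
        rw [e, abs_mul, abs_of_pos hγ0]
        calc γ * |∑ s', (P n s a s' - Pbar s a s') * Vbar s'|
            ≤ γ * ∑ s', |(P n s a s' - Pbar s a s') * Vbar s'| := by
              gcongr; exact Finset.abs_sum_le_sum_abs _ _
          _ ≤ γ * ∑ s', |P n s a s' - Pbar s a s'| * M := by
              gcongr with s' hs'
              rw [abs_mul]; gcongr; exact hVle s'
          _ = γ * M * ∑ s', |P n s a s' - Pbar s a s'| := by rw [← Finset.sum_mul]; ring
          _ ≤ γ * M * κ := by
              gcongr
              exact l1_le_kappa (hP n) hPbarK s a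
      rw [abs_sub_le_iff]
      simp only [Topt]
      constructor
      · rw [sub_le_iff_le_add]
        apply Finset.sup'_le
        intro a _
        have h1 : R s a + γ * ∑ s', P n s a s' * Vbar s'
            ≤ (R s a + γ * ∑ s', Pbar s a s' * Vbar s') + γ * M * κ := by
          have := abs_le.mp (hperA a)
          linarith [this.2]
        refine le_trans h1 ?_
        have := Finset.le_sup' (fun a => R s a + γ * ∑ s', Pbar s a s' * Vbar s')
          (Finset.mem_univ a)
        linarith
      · rw [sub_le_iff_le_add]
        apply Finset.sup'_le
        intro a _
        have h1 : R s a + γ * ∑ s', Pbar s a s' * Vbar s'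
            ≤ (R s a + γ * ∑ s', P n s a s' * Vbar s') + γ * M * κ := by
          have := abs_le.mp (hperA a)
          linarith [this.1]
        refine le_trans h1 ?_
        have := Finset.le_sup' (fun a => R s a + γ * ∑ s', P n s a s' * Vbar s')
          (Finset.mem_univ a)
        linarith
    calc |Tpol γ R Pbar (pinext n) Vbar s - Topt γ R Pbar Vbar s|
        ≤ |Tpol γ R Pbar (pinext n) Vbar s - Tpol γ R (P n) (pinext n) Vbar s|
          + |Tpol γ R (P n) (pinext n) Vbar s - Topt γ R (P n) Vbar s|
          + |Topt γ R (P n) Vbar s - Topt γ R Pbar Vbar s| := by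
          refine le_trans (abs_sub_le _ (Topt γ R (P n) Vbar s) _) ?_
          gcongr
          exact abs_sub_le _ _ _
      _ ≤ γ * M * κ + ε n + γ * M * κ := by gcongr
      _ = 2 * γ * M * κ + ε n := by ring
  apply supNorm_le
  intro s
  have expand : Tpol γ R Pbar piagg Vbar s = ∑ n, q n * Tpol γ R Pbar (pinext n) Vbar s := by
    simp only [Tpol, hpiagg, Finset.sum_mul]
    rw [Finset.sum_comm]
    refine Finset.sum_congr rfl fun n _ => ?_
    rw [Finset.mul_sum]
    exact Finset.sum_congr rfl fun a _ => by ring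
  have expand2 : Tpol γ R Pbar piagg Vbar s - Topt γ R Pbar Vbar s
      = ∑ n, q n * (Tpol γ R Pbar (pinext n) Vbar s - Topt γ R Pbar Vbar s) := by
    rw [expand]
    have : ∑ n, q n * (Tpol γ R Pbar (pinext n) Vbar s - Topt γ R Pbar Vbar s)
        = (∑ n, q n * Tpol γ R Pbar (pinext n) Vbar s) - (∑ n, q n) * Topt γ R Pbar Vbar s := by
      rw [Finset.sum_mul, ← Finset.sum_sub_distrib]
      exact Finset.sum_congr rfl fun n _ => by ring
    rw [this, hq1, one_mul]
  show |Tpol γ R Pbar piagg Vbar s - Topt γ R Pbar Vbar s| ≤ _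
  rw [expand2]
  calc |∑ n, q n * (Tpol γ R Pbar (pinext n) Vbar s - Topt γ R Pbar Vbar s)|
      ≤ ∑ n, |q n * (Tpol γ R Pbar (pinext n) Vbar s - Topt γ R Pbar Vbar s)| :=
        Finset.abs_sum_le_sum_abs _ _
    _ = ∑ n, q n * |Tpol γ R Pbar (pinext n) Vbar s - Topt γ R Pbar Vbar s| :=
        Finset.sum_congr rfl fun n _ => by rw [abs_mul, abs_of_nonneg (hq0 n)]
    _ ≤ ∑ n, q n * (2 * γ * M * kappa (P n) Pbar + ε n) := by
        refine Finset.sum_le_sum fun n _ => ?_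
        exact mul_le_mul_of_nonneg_left (key n s) (hq0 n)
    _ = 2 * γ * Rmax * (∑ n, q n * kappa (P n) Pbar) / (1 - γ) + ∑ n, q n * ε n := by
        simp only [hM, mul_add, Finset.sum_add_distrib, div_eq_mul_inv, Finset.mul_sum,
          Finset.sum_mul]
        congr 1
        exact Finset.sum_congr rfl fun n _ => by ring
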